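/- Let x_1,...,x_m ∈ (0,1) be distinct and let C₁, C₂ ≥ 0. Then there exist b₀ ∈ ℕ and σ₀ > 0 (depending only on C₁, C₂ and the points x_p) with the following property. Let b ≥ b₀, 0 < σ ≤ σ₀, λ = σ^{3/2}, and let r : (0,1) → ℝ satisfy: r(u) ≥ 0 for all u; r(u) ≥ 1 − C₁/b whenever min_p |u − x_p| ≥ 2^{−b}; and r(x_p) ≤ C₂/b for all p. Fix p ∈ {1,...,m}, let x = x_p, let z ∈ ℝ with |z| ≤ σ·log(1/σ), y = x + z, and let x̂ be a minimizer over u ∈ (0,1) of (y − u)² + λ·r(u). Then |x̂ − x_p| ≤ 2^{−b}. -/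

import Mathlib

set_option maxHeartbeats 400000


/-- Deterministic core of the structure-estimation lemma for the scalar Q-MAP denoiser
when the clean sample sits on an atom `x p`: for `b` large, `σ ≤ σ₀` and `λ = σ^{3/2}`,
if the noise satisfies `|z| ≤ σ·log(1/σ)` then any minimizer `xhat` of
`u ↦ (y-u)² + λ·r(u)` over `(0,1)` (with `y = x p + z`) satisfies `|xhat - x p| ≤ 2^{-b}`. -/
theorem stmt_6 (m : ℕ) (x : ℕ → ℝ)
    (hx : ∀ p ∈ Finset.Icc 1 m, x p ∈ Set.Ioo (0 : ℝ) 1)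
    (hxdist : ∀ p ∈ Finset.Icc 1 m, ∀ p' ∈ Finset.Icc 1 m, x p = x p' → p = p')
    (C1 C2 : ℝ) (hC1 : 0 ≤ C1) (hC2 : 0 ≤ C2) :
    ∃ b₀ : ℕ, ∃ σ₀ : ℝ, 0 < σ₀ ∧
      ∀ b : ℕ, b₀ ≤ b → ∀ σ : ℝ, 0 < σ → σ ≤ σ₀ →
        ∀ r : ℝ → ℝ,
          (∀ u ∈ Set.Ioo (0 : ℝ) 1, 0 ≤ r u) →
          (∀ u ∈ Set.Ioo (0 : ℝ) 1,
            (∀ p ∈ Finset.Icc 1 m, (2 : ℝ) ^ (-(b : ℤ)) ≤ |u - x p|) → 1 - C1 / b ≤ r u) →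
          (∀ p ∈ Finset.Icc 1 m, r (x p) ≤ C2 / b) →
          ∀ p ∈ Finset.Icc 1 m, ∀ z : ℝ, |z| ≤ σ * Real.log (1 / σ) →
            ∀ xhat ∈ Set.Ioo (0 : ℝ) 1,
              (∀ u ∈ Set.Ioo (0 : ℝ) 1,
                (x p + z - xhat) ^ 2 + σ ^ ((3 : ℝ) / 2) * r xhat ≤
                  (x p + z - u) ^ 2 + σ ^ ((3 : ℝ) / 2) * r u) →
              |xhat - x p| ≤ (2 : ℝ) ^ (-(b : ℤ)) := by
  classical
  -- minimum separation δ between distinct atoms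
  obtain ⟨δ, hδ0, hδ⟩ : ∃ δ : ℝ, 0 < δ ∧
      ∀ p ∈ Finset.Icc 1 m, ∀ q ∈ Finset.Icc 1 m, p ≠ q → δ ≤ |x p - x q| := by
    by_cases hSne : ((Finset.Icc 1 m ×ˢ Finset.Icc 1 m).filter
        (fun pq : ℕ × ℕ => pq.1 ≠ pq.2)).Nonempty
    · obtain ⟨pq, hpqmem, hpqle⟩ := Finset.exists_min_image _
        (fun pq : ℕ × ℕ => |x pq.1 - x pq.2|) hSne
      rw [Finset.mem_filter, Finset.mem_product] at hpqmem
      obtain ⟨⟨hp1, hp2⟩, hpq⟩ := hpqmem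
      refine ⟨|x pq.1 - x pq.2|, ?_, ?_⟩
      · have : x pq.1 ≠ x pq.2 := fun h => hpq (hxdist pq.1 hp1 pq.2 hp2 h)
        exact abs_pos.mpr (sub_ne_zero.mpr this)
      · intro p hp q hq hne
        exact hpqle (p, q) (by
          rw [Finset.mem_filter, Finset.mem_product]
          exact ⟨⟨hp, hq⟩, hne⟩)
    · refine ⟨1, one_pos, fun p hp q hq hne => absurd ?_ hSne⟩
      exact ⟨(p, q), by
        rw [Finset.mem_filter, Finset.mem_product]
        exact ⟨⟨hp, hq⟩, hne⟩⟩
  -- small-σ event: σ^{1/2} (log(1/σ))² ≤ 1/4 on (0, σA]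
  obtain ⟨σA, hσA0, hσA⟩ : ∃ σA : ℝ, 0 < σA ∧
      ∀ σ : ℝ, 0 < σ → σ ≤ σA → σ ^ ((1 : ℝ)/2) * (Real.log (1/σ))^2 ≤ 1/4 := by
    have h := tendsto_log_mul_rpow_nhdsGT_zero (r := (1:ℝ)/4) (by norm_num)
    have h2 : ∀ᶠ σ in nhdsWithin (0:ℝ) (Set.Ioi 0),
        |Real.log σ * σ ^ ((1:ℝ)/4)| ≤ 1/2 := by
      have := h.eventually (Metric.ball_mem_nhds (0:ℝ) (by norm_num : (0:ℝ) < 1/2))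
      filter_upwards [this] with σ hσ
      rw [Real.dist_eq, sub_zero] at hσ
      exact hσ.le
    rw [eventually_nhdsWithin_iff, Metric.eventually_nhds_iff] at h2
    obtain ⟨ε, hε0, hε⟩ := h2
    refine ⟨ε/2, by positivity, fun σ hσ0 hσε => ?_⟩
    have hball : dist σ 0 < ε := by
      rw [Real.dist_eq, sub_zero, abs_of_pos hσ0]; linarith
    have key := hε hball (Set.mem_Ioi.mpr hσ0)
    have hsq : (Real.log σ * σ ^ ((1:ℝ)/4))^2 ≤ (1/2)^2 := by
      rw [← sq_abs]
      exact pow_le_pow_left₀ (abs_nonneg _) key 2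
    have hσ14 : (σ ^ ((1:ℝ)/4))^2 = σ ^ ((1:ℝ)/2) := by
      rw [← Real.rpow_natCast (σ ^ ((1:ℝ)/4)) 2, ← Real.rpow_mul hσ0.le]
      norm_num
    have heq : (Real.log σ * σ ^ ((1:ℝ)/4))^2 = σ ^ ((1:ℝ)/2) * (Real.log σ)^2 := by
      rw [mul_pow, hσ14]; ring
    have hL : (Real.log (1/σ))^2 = (Real.log σ)^2 := by
      rw [one_div, Real.log_inv, neg_sq]
    rw [hL, ← heq]
    nlinarith [hsq]
  set K : ℝ := C2 + 1 with hK
  have hK0 : 0 < K := by positivity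
  set c : ℝ := ((δ/4)^2/(2*K)) ^ ((2:ℝ)/3) with hc
  have hA0 : 0 < (δ/4)^2/(2*K) := by positivity
  have hc0 : 0 < c := Real.rpow_pos_of_pos hA0 _
  clear_value K c
  refine ⟨max (⌈2*(C1+C2)⌉₊ + 1) (⌈4/δ⌉₊ + 1), min σA (min (1/2) c),
    lt_min hσA0 (lt_min (by norm_num) hc0), ?_⟩
  intro b hb σ hσ0 hσ₀ r hr0 hrfar hratom p hp z hz xhat hxhat hmin
  have hσA' : σ ≤ σA := le_trans hσ₀ (min_le_left _ _)
  have hσhalf : σ ≤ 1/2 := le_trans hσ₀ (le_trans (min_le_right _ _) (min_le_left _ _))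
  have hσc : σ ≤ c := le_trans hσ₀ (le_trans (min_le_right _ _) (min_le_right _ _))
  have hb1 : (⌈2*(C1+C2)⌉₊ + 1 : ℕ) ≤ b := le_trans (le_max_left _ _) hb
  have hb2 : (⌈4/δ⌉₊ + 1 : ℕ) ≤ b := le_trans (le_max_right _ _) hb
  have hbpos : 0 < b := lt_of_lt_of_le (Nat.succ_pos _) hb1
  have hbR : (1:ℝ) ≤ (b:ℝ) := by exact_mod_cast hbpos
  have hbR0 : (0:ℝ) < (b:ℝ) := by linarith
  -- (C1+C2)/b ≤ 1/2
  have hCb : (C1 + C2) / b ≤ 1/2 := by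
    rw [div_le_iff₀ hbR0]
    have h1 : 2*(C1+C2) ≤ (⌈2*(C1+C2)⌉₊ : ℝ) := Nat.le_ceil _
    have h2 : ((⌈2*(C1+C2)⌉₊ : ℕ) : ℝ) + 1 ≤ (b:ℝ) := by exact_mod_cast hb1
    linarith
  -- 2^{-b} ≤ δ/4
  have h2b : (2:ℝ) ^ (-(b:ℤ)) ≤ δ/4 := by
    have h1 : (4/δ : ℝ) ≤ (b:ℝ) := by
      have h0 := Nat.le_ceil (4/δ)
      have h2 : ((⌈4/δ⌉₊ : ℕ) : ℝ) + 1 ≤ (b:ℝ) := by exact_mod_cast hb2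
      linarith
    have h2 : (b:ℝ) ≤ 2^b := by exact_mod_cast (Nat.lt_two_pow_self (n := b)).le
    have h3 : (4/δ : ℝ) ≤ 2^b := le_trans h1 h2
    have h4 : (0:ℝ) < 2^b := by positivity
    rw [zpow_neg, zpow_natCast, inv_le_comm₀ h4 (by positivity : (0:ℝ) < δ/4), inv_div]
    exact h3
  -- basic positivity of λ = σ^{3/2}
  set lam : ℝ := σ ^ ((3:ℝ)/2) with hlam
  have hlam0 : 0 < lam := Real.rpow_pos_of_pos hσ0 _
  -- z² ≤ lam/4
  have hlog0 : 0 ≤ Real.log (1/σ) := by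
    apply Real.log_nonneg
    rw [le_div_iff₀ hσ0]; linarith
  have hsplit : σ ^ ((3:ℝ)/2) * σ ^ ((1:ℝ)/2) = σ^2 := by
    rw [← Real.rpow_add hσ0, ← Real.rpow_natCast σ 2]
    norm_num
  have hz2 : z^2 ≤ lam/4 := by
    have h1 : z^2 ≤ (σ * Real.log (1/σ))^2 := by
      rw [← sq_abs]
      exact pow_le_pow_left₀ (abs_nonneg _) hz 2
    have h2 : (σ * Real.log (1/σ))^2 = lam * (σ ^ ((1:ℝ)/2) * (Real.log (1/σ))^2) := by
      rw [mul_pow, hlam, ← mul_assoc, hsplit]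
    have h3 := hσA σ hσ0 hσA'
    calc z^2 ≤ lam * (σ ^ ((1:ℝ)/2) * (Real.log (1/σ))^2) := by rw [← h2]; exact h1
      _ ≤ lam * (1/4) := mul_le_mul_of_nonneg_left h3 hlam0.le
      _ = lam/4 := by ring
  clear_value lam
  -- compare with u = x p
  have hxp := hx p hp
  have hcomp := hmin (x p) hxp
  have hyx : (x p + z - x p) = z := by ring
  rw [hyx] at hcomp
  have hratomp := hratom p hp
  have hC2b : C2 / b ≤ C2 := by
    rw [div_le_iff₀ hbR0]
    have h := mul_le_mul_of_nonneg_left hbR hC2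
    linarith
  have hrxhat0 : 0 ≤ r xhat := hr0 xhat hxhat
  set w : ℝ := x p + z - xhat with hw
  clear_value w
  have hlr1 : lam * r (x p) ≤ lam * (C2/b) := mul_le_mul_of_nonneg_left hratomp hlam0.le
  have hlr2 : lam * (C2/b) ≤ lam * C2 := mul_le_mul_of_nonneg_left hC2b hlam0.le
  have hlr0 : 0 ≤ lam * r xhat := mul_nonneg hlam0.le hrxhat0
  -- w² ≤ lam * (C2 + 1/4)
  have hw2 : w^2 ≤ lam * (C2 + 1/4) := by
    have hdist : lam * (C2 + 1/4) = lam * C2 + lam/4 := by ring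
    linarith [hcomp, hz2, hlr1, hlr2, hlr0]
  -- |xhat - x p| ≤ δ/4
  have hclose : |xhat - x p| ≤ δ/4 := by
    have hzw : xhat - x p = z - w := by rw [hw]; ring
    have hd2 : (xhat - x p)^2 ≤ 2 * (lam * K) := by
      rw [hzw]
      have hsq := sq_nonneg (z + w)
      have hexp : (z - w)^2 + (z + w)^2 = 2*z^2 + 2*w^2 := by ring
      have hKk : lam * K - (2 * (lam/4) + 2 * (lam * (C2 + 1/4))) + lam * K = lam := by
        rw [hK]; ring
      linarith [hz2, hw2, hlam0.le]
    have hlamc : lam ≤ (δ/4)^2/(2*K) := by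
      have h1 : lam ≤ c ^ ((3:ℝ)/2) := by
        rw [hlam]
        exact Real.rpow_le_rpow hσ0.le hσc (by norm_num)
      have h2 : c ^ ((3:ℝ)/2) = (δ/4)^2/(2*K) := by
        rw [hc, ← Real.rpow_mul hA0.le]
        norm_num
      linarith [h2 ▸ h1]
    have hd3 : (xhat - x p)^2 ≤ (δ/4)^2 := by
      have h5 : 2 * (lam * K) ≤ 2 * ((δ/4)^2/(2*K) * K) := by
        have := mul_le_mul_of_nonneg_right hlamc hK0.le
        linarith
      have heq : 2 * ((δ/4)^2/(2*K) * K) = (δ/4)^2 := by field_simp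
      linarith
    by_contra hcon
    push_neg at hcon
    have hlt : (δ/4)^2 < (xhat - x p)^2 := by
      rw [← sq_abs (xhat - x p)]
      exact pow_lt_pow_left₀ hcon (by positivity) two_ne_zero
    linarith
  -- xhat is within 2^{-b} of some atom
  have hnear : ∃ q ∈ Finset.Icc 1 m, |xhat - x q| < (2:ℝ) ^ (-(b:ℤ)) := by
    by_contra hcon
    push_neg at hcon
    have hr1 : 1 - C1/b ≤ r xhat := hrfar xhat hxhat hcon
    have h1 : lam * (1 - C1/b) ≤ z^2 + lam * (C2/b) := by
      have ha := mul_le_mul_of_nonneg_left hr1 hlam0.le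
      have hb' := sq_nonneg w
      linarith [hcomp, hlr1]
    have h2 : lam * (1 - C1/b) ≤ lam/4 + lam * (C2/b) := by linarith
    have h3 : 1 - C1/b ≤ 1/4 + C2/b :=
      (mul_le_mul_iff_right₀ hlam0).mp (by linarith : lam * (1 - C1/b) ≤ lam * (1/4 + C2/b))
    have h5 : C1/b + C2/b ≤ 1/2 := by rw [← add_div]; exact hCb
    linarith
  obtain ⟨q, hq, hqnear⟩ := hnear
  by_cases hpq : q = p
  · rw [hpq] at hqnear; linarith
  · exfalso
    have h1 : δ ≤ |x p - x q| := hδ p hp q hq (fun h => hpq h.symm)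
    have h2 : |x p - x q| ≤ |xhat - x p| + |xhat - x q| := by
      have heq : x p - x q = -(xhat - x p) + (xhat - x q) := by ring
      rw [heq]
      calc |(-(xhat - x p)) + (xhat - x q)| ≤ |(-(xhat - x p))| + |xhat - x q| := abs_add_le _ _
        _ = |xhat - x p| + |xhat - x q| := by rw [abs_neg]
    have h3 : |xhat - x q| < δ/4 := lt_of_lt_of_le hqnear h2b
    linarith
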